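/- Let A, B be n×n matrices with Bᵀ = -B, let G be a generalized inverse of A with P₁ = GA, P₂ = AG, and suppose (1 - P₁ᵀ) B (1 - P₁) = 0. Then X = (1/2) Gᵀ B P₁ + Gᵀ B (1 - P₁) satisfies Aᵀ X - Xᵀ A = B. -/
import Mathlib


/-- Sufficiency: if `Bᵀ = -B` and `(1 - P₁ᵀ) B (1 - P₁) = 0` with `P₁ = G*A`,
`P₂ = A*G` for a generalized inverse `G` of `A`, then
`X = (1/2) Gᵀ B P₁ + Gᵀ B (1 - P₁)` solves `Aᵀ X - Xᵀ A = B`. -/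
theorem matrixeqn_particular_solution {n : ℕ} {F : Type*} [Field F]
    (hchar : (2 : F) ≠ 0)
    (A B G : Matrix (Fin n) (Fin n) F)
    (h1 : A * G * A = A) (h2 : G * A * G = G)
    (hB : B.transpose = -B)
    (hC2 : (1 - (G * A).transpose) * B * (1 - G * A) = 0) :
    A.transpose * ((1 / 2 : F) • (G.transpose * B * (G * A)) +
        G.transpose * B * (1 - G * A)) -
      ((1 / 2 : F) • (G.transpose * B * (G * A)) +
        G.transpose * B * (1 - G * A)).transpose * A = B := by
  have hexp : B = (G * A).transpose * B * (G * A)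
      + (G * A).transpose * B * (1 - G * A)
      + (1 - (G * A).transpose) * B * (G * A) := by
    have h : (1 - (G * A).transpose) * B * (1 - G * A)
        = B - ((G * A).transpose * B * (G * A)
          + (G * A).transpose * B * (1 - G * A)
          + (1 - (G * A).transpose) * B * (G * A)) := by noncomm_ring
    rw [hC2] at h
    exact sub_eq_zero.mp h.symm
  conv_rhs => rw [hexp]
  simp only [Matrix.transpose_add, Matrix.transpose_smul, Matrix.transpose_mul,
    Matrix.transpose_sub, Matrix.transpose_one, Matrix.transpose_transpose, hB,
    Matrix.mul_add, Matrix.add_mul, Matrix.mul_sub, Matrix.sub_mul,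
    Matrix.mul_smul, Matrix.smul_mul, Matrix.mul_neg, Matrix.neg_mul,
    Matrix.mul_one, Matrix.one_mul, Matrix.mul_assoc, smul_neg, smul_sub, smul_add]
  match_scalars <;> field_simp <;> ring
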